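/- Let ψ be an equilibrium-free flow on a closed Riemannian manifold P. For each generalized symmetry R of ψ, the one-dimensional distribution E(p) = Span(X_ψ(p)) is invariant under the derivative of R, and the Lyapunov exponent of R at any point p in the direction X_ψ(p) equals log|ρ_ψ(R)|. -/

import Mathlib

open Manifold

/-- The Lyapunov exponent of a map `R` at `p` in direction `v`:
`χ_R(p,v) = limsup_{m→∞} (1/m) log ‖T_p R^m (v)‖`. -/
noncomputable def lyapunovExponent
    {n : ℕ} {P : Type*} [TopologicalSpace P]
    [ChartedSpace (EuclideanSpace ℝ (Fin n)) P]
    (R : P → P) (p : P) (v : EuclideanSpace ℝ (Fin n)) : ℝ :=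
  Filter.limsup
    (fun m : ℕ => Real.log ‖(show EuclideanSpace ℝ (Fin n) from mfderiv (𝓡 n) (𝓡 n) (R^[m]) p v)‖ / m) Filter.atTop

/-- For an equilibrium-free flow `ψ` on a closed Riemannian manifold and any
generalized symmetry `R` of `ψ` with multiplier `μ`, the line field `E(p) = span(X_ψ(p))` is
invariant under the derivative of `R`, and the Lyapunov exponent of `R` at every point `p` in
the direction `X_ψ(p)` equals `log |μ|`. -/
theorem lyapunov_exponent_of_symmetry
    {n : ℕ} {P : Type*} [TopologicalSpace P] [CompactSpace P]
    [ChartedSpace (EuclideanSpace ℝ (Fin n)) P]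
    [IsManifold (𝓡 n) (⊤ : ℕ∞) P]
    (ψ : ℝ → P → P)
    (hψ0 : ψ 0 = id)
    (hψadd : ∀ s t : ℝ, ψ (s + t) = ψ s ∘ ψ t)
    (hψsmooth : ContMDiff (𝓘(ℝ, ℝ).prod (𝓡 n)) (𝓡 n) (⊤ : ℕ∞) (fun q : ℝ × P => ψ q.1 q.2))
    (X : P → EuclideanSpace ℝ (Fin n))
    (hX : ∀ p : P, mfderiv 𝓘(ℝ, ℝ) (𝓡 n) (fun t : ℝ => ψ t p) 0 (1 : ℝ) = X p)
    (hXcont : Continuous X)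
    (hXne : ∀ p : P, X p ≠ 0)  -- ψ is equilibrium-free
    (R : Diffeomorph (𝓡 n) (𝓡 n) P P (⊤ : ℕ∞)) (μ : ℝ) (hμ : μ ≠ 0)
    (hsym : ∀ p : P, mfderiv (𝓡 n) (𝓡 n) (⇑R) p (X p) = μ • X (R p)) :
    -- the one-dimensional distribution spanned by X is invariant under T R
    (∀ (p : P) (v : EuclideanSpace ℝ (Fin n)),
        v ∈ Submodule.span ℝ {X p} →
        mfderiv (𝓡 n) (𝓡 n) (⇑R) p v ∈ Submodule.span ℝ {X (R p)}) ∧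
    -- the Lyapunov exponent in the flow direction is log |μ| everywhere
    (∀ p : P, lyapunovExponent (⇑R) p (X p) = Real.log |μ|) := by

  have hRd : MDifferentiable (𝓡 n) (𝓡 n) (⇑R) := R.mdifferentiable (by simp)
  have hiter : ∀ m : ℕ, MDifferentiable (𝓡 n) (𝓡 n) ((⇑R)^[m]) := by
    intro m
    induction m with
    | zero => simpa using mdifferentiable_id
    | succ m ih =>
        rw [Function.iterate_succ']
        exact hRd.comp ih
  have key : ∀ (p : P) (m : ℕ),
      mfderiv (𝓡 n) (𝓡 n) ((⇑R)^[m]) p (X p) = (μ ^ m) • X ((⇑R)^[m] p) := by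
    intro p m
    induction m with
    | zero => simp [mfderiv_id]; rfl
    | succ m ih =>
        have hcomp := mfderiv_comp p ((hRd ((⇑R)^[m] p)))
          ((hiter m) p)
        rw [Function.iterate_succ']
        rw [hcomp]
        change (mfderiv (𝓡 n) (𝓡 n) (⇑R) ((⇑R)^[m] p))
          ((mfderiv (𝓡 n) (𝓡 n) ((⇑R)^[m]) p) (X p)) = _
        erw [ih, (mfderiv (𝓡 n) (𝓡 n) (⇑R) ((⇑R)^[m] p)).map_smul (μ ^ m) (X ((⇑R)^[m] p)), hsym]
        show μ ^ m • μ • X (R ((⇑R)^[m] p)) = μ ^ (m + 1) • X (R ((⇑R)^[m] p))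
        rw [smul_smul, pow_succ]
  constructor
  · intro p v hv
    obtain ⟨c, rfl⟩ := Submodule.mem_span_singleton.mp hv
    erw [(mfderiv (𝓡 n) (𝓡 n) (⇑R) p).map_smul c (X p), hsym]
    show c • (μ • X (R p)) ∈ Submodule.span ℝ {X (R p)}
    exact Submodule.smul_mem _ _ (Submodule.smul_mem _ _ (Submodule.mem_span_singleton_self _))
  · intro p
    -- bounds on ‖X q‖
    obtain ⟨qa, -, hqa⟩ := isCompact_univ.exists_isMinOn ⟨p, Set.mem_univ p⟩
      (hXcont.norm.continuousOn)
    obtain ⟨qb, -, hqb⟩ := isCompact_univ.exists_isMaxOn ⟨p, Set.mem_univ p⟩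
      (hXcont.norm.continuousOn)
    have ha : 0 < ‖X qa‖ := norm_pos_iff.mpr (hXne qa)
    have hbound : ∀ q : P, Real.log ‖X qa‖ ≤ Real.log ‖X q‖ ∧
        Real.log ‖X q‖ ≤ Real.log ‖X qb‖ := by
      intro q
      constructor
      · exact Real.log_le_log ha (hqa (Set.mem_univ q))
      · exact Real.log_le_log (norm_pos_iff.mpr (hXne q)) (hqb (Set.mem_univ q))
    have htend0 : Filter.Tendsto
        (fun m : ℕ => Real.log ‖X ((⇑R)^[m] p)‖ / m) Filter.atTop (nhds 0) := by
      apply tendsto_of_tendsto_of_tendsto_of_le_of_le'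
        (tendsto_const_div_atTop_nhds_zero_nat (Real.log ‖X qa‖))
        (tendsto_const_div_atTop_nhds_zero_nat (Real.log ‖X qb‖))
      · filter_upwards [Filter.eventually_gt_atTop 0] with m hm
        exact div_le_div_of_nonneg_right (hbound _).1 (by positivity) |>.trans_eq rfl
      · filter_upwards [Filter.eventually_gt_atTop 0] with m hm
        exact div_le_div_of_nonneg_right (hbound _).2 (by positivity)
    have htend : Filter.Tendsto
        (fun m : ℕ => Real.log ‖(show EuclideanSpace ℝ (Fin n) from
          mfderiv (𝓡 n) (𝓡 n) ((⇑R)^[m]) p (X p))‖ / m) Filter.atTop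
        (nhds (Real.log |μ|)) := by
      have heq : ∀ᶠ m : ℕ in Filter.atTop,
          Real.log ‖(show EuclideanSpace ℝ (Fin n) from
            mfderiv (𝓡 n) (𝓡 n) ((⇑R)^[m]) p (X p))‖ / m
          = Real.log |μ| + Real.log ‖X ((⇑R)^[m] p)‖ / m := by
        filter_upwards [Filter.eventually_gt_atTop 0] with m hm
        have hmne : (m : ℝ) ≠ 0 := Nat.cast_ne_zero.mpr hm.ne'
        rw [key p m]
        rw [norm_smul]
        rw [Real.log_mul (norm_ne_zero_iff.mpr (pow_ne_zero m hμ)) (norm_ne_zero_iff.mpr (hXne _))]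
        rw [Real.norm_eq_abs, abs_pow, Real.log_pow]
        field_simp
      rw [Filter.tendsto_congr' heq]
      simpa using (htend0.const_add (Real.log |μ|))
    unfold lyapunovExponent
    exact htend.limsup_eq
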